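/- (Non-expansiveness of the first layer.) Assume σ : ℝ → ℝ satisfies |σ(a)−σ(b)| ≤ |a−b|, and define x⁽¹⁾[x](u,θ,α,λ) = σ( Σ_{λ'=1}^{M₀} ∫ x(u+u',λ') 2^{−2α} W_{λ',λ}(2^{−α}R_{−θ}u') du' + b(λ) ). Let B_{λ',λ} = ∫|W_{λ',λ}(u)|du, and B₁ = max{ sup_λ Σ_{λ'} B_{λ',λ}, (M₀/M₁) sup_{λ'} Σ_λ B_{λ',λ} }. Then for any two inputs x₁, x₂: ‖x⁽¹⁾[x₁] − x⁽¹⁾[x₂]‖ ≤ B₁ ‖x₁ − x₂‖, where ‖x‖² = (1/M₀)Σ_λ ∫|x(u,λ)|²du on inputs and ‖y‖² = sup_α (1/M₁)Σ_λ ∫_{S¹}∫_{ℝ²}|y(u,θ,α,λ)|²dudθ on outputs. -/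

import Mathlib

open MeasureTheory Real Complex
open scoped ENNReal NNReal

noncomputable section

instance : Fact (0 < 2 * Real.pi) := ⟨Real.two_pi_pos⟩
instance : MeasureSpace Real.Angle :=
  inferInstanceAs (MeasureSpace (AddCircle (2 * Real.pi)))

/-- Counterclockwise rotation by the angle `θ`, acting on the plane `ℝ² ≅ ℂ`. -/
def rot (θ : Real.Angle) (z : ℂ) : ℂ := (θ.toCircle : ℂ) * z

/-- The underlying set of the roto-scale-translation group `RST = (SO(2) × ℝ) ⋉ ℝ²`. -/
abbrev RST : Type := Real.Angle × ℝ × ℂ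

/-- Group multiplication on `RST`: `(η, β, v) · (θ, α, u) = (θ + η, α + β, v + R_η 2^β u)`. -/
def rstMul (g h : RST) : RST :=
  (h.1 + g.1, h.2.1 + g.2.1, g.2.2 + rot g.1 (((2:ℝ) ^ g.2.1) • h.2.2))
/-- Norm on input images: `‖x‖² = (1/M₀) Σ_{λ'} ∫ |x(u,λ')|² du`. -/
def inNorm (M₀ : ℕ) (x : ℂ → Fin M₀ → ℝ) : ℝ :=
  Real.sqrt ((M₀ : ℝ)⁻¹ * ∑ lam' : Fin M₀, ∫ u : ℂ, (x u lam') ^ 2)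

/-- Norm on first-layer features:
`‖y‖² = sup_α (1/M₁) Σ_λ (1/2π) ∫_{S¹} ∫_{ℝ²} |y(u,θ,α,λ)|² du dθ`. -/
def outNorm (M₁ : ℕ) (y : ℂ → Real.Angle → ℝ → Fin M₁ → ℝ) : ℝ :=
  Real.sqrt (⨆ α : ℝ, (M₁ : ℝ)⁻¹ * ∑ lam : Fin M₁,
    (2 * Real.pi)⁻¹ * ∫ θ : Real.Angle, ∫ u : ℂ, (y u θ α lam) ^ 2)

/-- The first layer of an RST-CNN. -/
def layer1 (M₀ M₁ : ℕ) (σ : ℝ → ℝ) (W : Fin M₀ → Fin M₁ → ℂ → ℝ) (b : Fin M₁ → ℝ)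
    (x : ℂ → Fin M₀ → ℝ) : ℂ → Real.Angle → ℝ → Fin M₁ → ℝ :=
  fun u θ α lam => σ ((∑ lam' : Fin M₀, ∫ u' : ℂ,
    x (u + u') lam' * ((2:ℝ) ^ (-(2*α)) * W lam' lam (((2:ℝ) ^ (-α)) • rot (-θ) u'))) + b lam)

namespace Layer1Aux

lemma rpow_half_sq (x : ℝ≥0∞) : (x ^ (1/2 : ℝ)) ^ 2 = x := by
  rw [← ENNReal.rpow_natCast (x ^ (1/2:ℝ)) 2, ← ENNReal.rpow_mul]
  norm_num

lemma sq_rpow_half (x : ℝ≥0∞) : (x ^ 2) ^ (1/2 : ℝ) = x := by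
  rw [← ENNReal.rpow_natCast x 2, ← ENNReal.rpow_mul]
  norm_num

lemma lintegral_cs {α : Type*} [MeasurableSpace α] (μ : Measure α) (f g : α → ℝ≥0∞)
    (hf : AEMeasurable f μ) (hg : AEMeasurable g μ) :
    (∫⁻ a, f a * g a ∂μ) ^ 2 ≤ (∫⁻ a, (f a) ^ 2 ∂μ) * (∫⁻ a, (g a) ^ 2 ∂μ) := by
  have hpq : (2:ℝ).HolderConjugate 2 := Real.holderConjugate_iff.mpr ⟨one_lt_two, by norm_num⟩
  have h := ENNReal.lintegral_mul_le_Lp_mul_Lq μ hpq hf hg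
  simp only [Pi.mul_apply] at h
  have h2 : ∀ (x:ℝ≥0∞), x ^ (2:ℝ) = x ^ 2 := fun x => by
    rw [← ENNReal.rpow_natCast x 2]; norm_num
  calc (∫⁻ a, f a * g a ∂μ)^2
      ≤ ((∫⁻ a, f a ^ (2:ℝ) ∂μ) ^ (1/2:ℝ) * (∫⁻ a, g a ^ (2:ℝ) ∂μ) ^ (1/2:ℝ))^2 := by
        gcongr
    _ = _ := by
        rw [mul_pow, rpow_half_sq, rpow_half_sq]
        simp_rw [h2]

lemma finset_cs {n : ℕ} (f g : Fin n → ℝ≥0∞) :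
    (∑ i, f i * g i) ^ 2 ≤ (∑ i, (f i)^2) * (∑ i, (g i)^2) := by
  have h := lintegral_cs (Measure.count : Measure (Fin n)) f g
    (measurable_of_countable f).aemeasurable (measurable_of_countable g).aemeasurable
  simpa [MeasureTheory.lintegral_count, tsum_fintype] using h

lemma lintegral_weighted_cs {α : Type*} [MeasurableSpace α] (μ : Measure α) (F w : α → ℝ≥0∞)
    (hF : AEMeasurable F μ) (hw : AEMeasurable w μ) :
    (∫⁻ a, F a * w a ∂μ) ^ 2 ≤ (∫⁻ a, w a ∂μ) * (∫⁻ a, (F a)^2 * w a ∂μ) := by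
  have h := lintegral_cs μ (fun a => F a * (w a) ^ (1/2:ℝ)) (fun a => (w a) ^ (1/2:ℝ))
      (hF.mul (hw.pow_const _)) (hw.pow_const _)
  have e1 : ∀ a, (F a * (w a)^(1/2:ℝ)) * ((w a)^(1/2:ℝ)) = F a * w a := fun a => by
    rw [mul_assoc, ← sq ((w a)^(1/2:ℝ)), rpow_half_sq]
  have e2 : ∀ a, (F a * (w a)^(1/2:ℝ))^2 = (F a)^2 * w a := fun a => by
    rw [mul_pow, rpow_half_sq]
  have e3 : ∀ a, ((w a)^(1/2:ℝ))^2 = w a := fun a => rpow_half_sq _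
  simp_rw [e1, e2, e3] at h
  rw [mul_comm]
  exact h

lemma kernel_cov (Wf : ℂ → ℝ) (hWf : Integrable Wf) (θ : Real.Angle) (α : ℝ) :
    Integrable (fun u' : ℂ => (2:ℝ) ^ (-(2*α)) * Wf (((2:ℝ) ^ (-α)) • rot (-θ) u')) ∧
    ∫ u' : ℂ, |(2:ℝ) ^ (-(2*α)) * Wf (((2:ℝ) ^ (-α)) • rot (-θ) u')| = ∫ u, |Wf u| := by
  set c : ℝ := (2:ℝ) ^ (-α) with hc
  have hcpos : 0 < c := Real.rpow_pos_of_pos two_pos _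
  have hc2 : (2:ℝ) ^ (-(2*α)) = c^2 := by
    rw [hc, ← Real.rpow_natCast ((2:ℝ)^(-α)) 2, ← Real.rpow_mul (by norm_num : (0:ℝ) ≤ 2)]
    ring_nf
  set e := rotation ((-θ).toCircle) with he
  have hrot : ∀ z, rot (-θ) z = e z := fun z => rfl
  have hmp : MeasurePreserving e volume volume := e.measurePreserving
  have hemb : MeasurableEmbedding e := e.toHomeomorph.measurableEmbedding
  have hint1 : Integrable (fun z : ℂ => Wf (c • z)) := hWf.comp_smul (ne_of_gt hcpos)
  have hint : Integrable (fun u' : ℂ => Wf (c • e u')) :=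
    (hmp.integrable_comp_emb hemb).2 hint1
  constructor
  · have := (hint.const_mul (c^2))
    refine this.congr (Filter.Eventually.of_forall fun u' => ?_)
    show c ^ 2 * Wf (c • e u') = (2:ℝ) ^ (-(2*α)) * Wf (((2:ℝ) ^ (-α)) • rot (-θ) u')
    rw [hc2, hrot]
  · have habs : ∀ u' : ℂ, |(2:ℝ) ^ (-(2*α)) * Wf (c • rot (-θ) u')| = c^2 * |Wf (c • e u')| := by
      intro u'
      rw [hc2, hrot, abs_mul, _root_.abs_of_nonneg (sq_nonneg c)]
    simp_rw [habs]
    rw [MeasureTheory.integral_const_mul]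
    have h1 : ∫ u' : ℂ, |Wf (c • e u')| = ∫ z : ℂ, |Wf (c • z)| :=
      hmp.integral_comp hemb (fun z => |Wf (c • z)|)
    rw [h1, MeasureTheory.Measure.integral_comp_smul volume (fun z => |Wf z|) c,
      Complex.finrank_real_complex, smul_eq_mul,
      _root_.abs_of_nonneg (inv_nonneg.2 (sq_nonneg c)), ← mul_assoc,
      mul_inv_cancel₀ (by positivity : (c:ℝ)^2 ≠ 0), one_mul]

end Layer1Aux

/-- non-expansiveness of the first layer. If `σ` is 1-Lipschitz,
`B_{λ',λ} = ∫ |W_{λ',λ}|` and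
`B₁ = max{ sup_λ Σ_{λ'} B_{λ',λ}, (M₀/M₁) sup_{λ'} Σ_λ B_{λ',λ} }`, then
`‖x⁽¹⁾[x₁] − x⁽¹⁾[x₂]‖ ≤ B₁ ‖x₁ − x₂‖`. -/
theorem layer1_nonexpansive (M₀ M₁ : ℕ) (hM₀ : 0 < M₀) (hM₁ : 0 < M₁)
    (σ : ℝ → ℝ) (hσ : ∀ a b : ℝ, |σ a - σ b| ≤ |a - b|)
    (W : Fin M₀ → Fin M₁ → ℂ → ℝ) (hW : ∀ lam' lam, Integrable (W lam' lam))
    (b : Fin M₁ → ℝ) (x₁ x₂ : ℂ → Fin M₀ → ℝ)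
    (hx₁ : ∀ lam', MemLp (fun u => x₁ u lam') 2 (volume : Measure ℂ))
    (hx₂ : ∀ lam', MemLp (fun u => x₂ u lam') 2 (volume : Measure ℂ))
    (B : Fin M₀ → Fin M₁ → ℝ) (hB : ∀ lam' lam, B lam' lam = ∫ u : ℂ, |W lam' lam u|)
    (B₁ : ℝ)
    (hB₁ : B₁ = max (⨆ lam : Fin M₁, ∑ lam' : Fin M₀, B lam' lam)
      (((M₀ : ℝ) / (M₁ : ℝ)) * ⨆ lam' : Fin M₀, ∑ lam : Fin M₁, B lam' lam)) :
    outNorm M₁ (fun u θ α lam =>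
        layer1 M₀ M₁ σ W b x₁ u θ α lam - layer1 M₀ M₁ σ W b x₂ u θ α lam) ≤
      B₁ * inNorm M₀ (fun u lam' => x₁ u lam' - x₂ u lam') := by
  classical
  haveI : Nonempty (Fin M₀) := ⟨⟨0, hM₀⟩⟩
  haveI : Nonempty (Fin M₁) := ⟨⟨0, hM₁⟩⟩
  haveI hfm : IsFiniteMeasure (volume : Measure Real.Angle) :=
    inferInstanceAs (IsFiniteMeasure (volume : Measure (AddCircle (2 * Real.pi))))
  have hσc : Continuous σ := by
    have : LipschitzWith 1 σ := LipschitzWith.of_dist_le_mul fun a b => by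
      rw [Real.dist_eq, Real.dist_eq]; simpa using hσ a b
    exact this.continuous
  -- strongly measurable representatives
  set X₁ : Fin M₀ → ℂ → ℝ := fun l' => (hx₁ l').1.mk (fun u => x₁ u l') with hX₁def
  set X₂ : Fin M₀ → ℂ → ℝ := fun l' => (hx₂ l').1.mk (fun u => x₂ u l') with hX₂def
  have hX₁sm : ∀ l', StronglyMeasurable (X₁ l') := fun l' => (hx₁ l').1.stronglyMeasurable_mk
  have hX₂sm : ∀ l', StronglyMeasurable (X₂ l') := fun l' => (hx₂ l').1.stronglyMeasurable_mk
  have hX₁ae : ∀ l', (fun u => x₁ u l') =ᵐ[(volume : Measure ℂ)] X₁ l' := fun l' => (hx₁ l').1.ae_eq_mk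
  have hX₂ae : ∀ l', (fun u => x₂ u l') =ᵐ[(volume : Measure ℂ)] X₂ l' := fun l' => (hx₂ l').1.ae_eq_mk
  set Wm : Fin M₀ → Fin M₁ → ℂ → ℝ := fun l' l => (hW l' l).1.mk (W l' l) with hWmdef
  have hWsm : ∀ l' l, StronglyMeasurable (Wm l' l) := fun l' l => (hW l' l).1.stronglyMeasurable_mk
  have hWae : ∀ l' l, W l' l =ᵐ[(volume : Measure ℂ)] Wm l' l := fun l' l => (hW l' l).1.ae_eq_mk
  have hWmint : ∀ l' l, Integrable (Wm l' l) := fun l' l => (hW l' l).congr (hWae l' l)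
  -- difference function
  set d : Fin M₀ → ℂ → ℝ := fun l' u => X₁ l' u - X₂ l' u with hddef
  have hdm : ∀ l', Measurable (d l') := fun l' => ((hX₁sm l').sub (hX₂sm l')).measurable
  have hdae : ∀ l', (fun u => x₁ u l' - x₂ u l') =ᵐ[(volume : Measure ℂ)] d l' := fun l' =>
    (hX₁ae l').sub (hX₂ae l')
  have hd2 : ∀ l', MemLp (d l') 2 (volume : Measure ℂ) := fun l' =>
    MemLp.ae_eq (hdae l') ((hx₁ l').sub (hx₂ l'))
  set Ed : Fin M₀ → ℝ := fun l' => ∫ u : ℂ, (x₁ u l' - x₂ u l')^2 with hEddef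
  have hEdd : ∀ l', Ed l' = ∫ u : ℂ, (d l' u)^2 := fun l' =>
    integral_congr_ae ((hdae l').mono fun u hu => by dsimp only at hu ⊢; rw [hu])
  have hEdnn : ∀ l', 0 ≤ Ed l' := fun l' => integral_nonneg fun u => sq_nonneg _
  have hd2int : ∀ l', Integrable (fun u : ℂ => (d l' u)^2) := fun l' => (hd2 l').integrable_sq
  have hdlint : ∀ l', ∫⁻ u : ℂ, ((‖d l' u‖₊ : ℝ≥0∞))^2 = ENNReal.ofReal (Ed l') := by
    intro l'
    rw [hEdd l', MeasureTheory.ofReal_integral_eq_lintegral_ofReal (hd2int l')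
      (Filter.Eventually.of_forall fun u => sq_nonneg _)]
    exact lintegral_congr fun u => by
      rw [← enorm_eq_nnnorm, Real.enorm_eq_ofReal_abs, ← ENNReal.ofReal_pow (abs_nonneg _), _root_.sq_abs]
  -- B facts
  have hBm : ∀ l' l, B l' l = ∫ u : ℂ, |Wm l' l u| := fun l' l => by
    rw [hB l' l]; exact integral_congr_ae ((hWae l' l).mono fun u hu => by dsimp only at hu ⊢; rw [hu])
  have hBnn : ∀ l' l, 0 ≤ B l' l := fun l' l => by
    rw [hB l' l]; exact integral_nonneg fun u => abs_nonneg _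
  -- kernel
  set K : Fin M₀ → Fin M₁ → Real.Angle → ℝ → ℂ → ℝ :=
    fun l' l θ α u' => (2:ℝ)^(-(2*α)) * Wm l' l (((2:ℝ)^(-α)) • rot (-θ) u') with hKdef
  have hKint : ∀ l' l θ α, Integrable (K l' l θ α) := fun l' l θ α =>
    (Layer1Aux.kernel_cov _ (hWmint l' l) θ α).1
  have hKabs : ∀ l' l θ α, ∫ u' : ℂ, |K l' l θ α u'| = B l' l := fun l' l θ α => by
    rw [hBm l' l]; exact (Layer1Aux.kernel_cov _ (hWmint l' l) θ α).2
  have hKm : ∀ l' l θ α, Measurable (K l' l θ α) := by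
    intro l' l θ α
    have hrotm : Measurable (rot (-θ)) := (rotation ((-θ).toCircle)).continuous.measurable
    have hT : Measurable (fun u' : ℂ => ((2:ℝ)^(-α)) • rot (-θ) u') := hrotm.const_smul ((2:ℝ)^(-α))
    exact measurable_const.mul ((hWsm l' l).measurable.comp hT)
  have hKlint : ∀ l' l θ α, ∫⁻ u' : ℂ, (‖K l' l θ α u'‖₊ : ℝ≥0∞) = ENNReal.ofReal (B l' l) := by
    intro l' l θ α
    rw [← hKabs l' l θ α,
      MeasureTheory.ofReal_integral_eq_lintegral_ofReal (hKint l' l θ α).abs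
        (Filter.Eventually.of_forall fun u => abs_nonneg _)]
    exact lintegral_congr fun u => by rw [← enorm_eq_nnnorm, Real.enorm_eq_ofReal_abs]
  -- replacing data by measurable representatives inside the layer
  have hlayer : ∀ (x : ℂ → Fin M₀ → ℝ) (X : Fin M₀ → ℂ → ℝ),
      (∀ l', (fun u => x u l') =ᵐ[(volume : Measure ℂ)] X l') →
      ∀ (u : ℂ) (θ : Real.Angle) (α : ℝ) (l : Fin M₁),
      layer1 M₀ M₁ σ W b x u θ α l
        = σ ((∑ l' : Fin M₀, ∫ u' : ℂ, X l' (u + u') * K l' l θ α u') + b l) := by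
    intro x X hax u θ α l
    show σ _ = σ _
    refine congrArg σ ?_
    refine congrArg (fun t => t + b l) ?_
    refine Finset.sum_congr rfl fun l' _ => ?_
    refine integral_congr_ae ?_
    have hsmul : Measure.QuasiMeasurePreserving (fun z : ℂ => ((2:ℝ)^(-α)) • z)
        (volume : Measure ℂ) volume := by
      refine ⟨measurable_id.const_smul ((2:ℝ)^(-α)), ?_⟩
      rw [MeasureTheory.Measure.map_addHaar_smul (volume : Measure ℂ)
        (ne_of_gt (Real.rpow_pos_of_pos two_pos (-α)))]
      exact MeasureTheory.Measure.smul_absolutelyContinuous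
    have hrotq : Measure.QuasiMeasurePreserving (rot (-θ)) (volume : Measure ℂ) volume :=
      ((rotation ((-θ).toCircle)).measurePreserving).quasiMeasurePreserving
    have hTq : Measure.QuasiMeasurePreserving (fun u' : ℂ => ((2:ℝ)^(-α)) • rot (-θ) u')
        (volume : Measure ℂ) volume := hsmul.comp hrotq
    have h1 : (fun u' : ℂ => x (u + u') l') =ᵐ[(volume : Measure ℂ)]
        (fun u' : ℂ => X l' (u + u')) :=
      (measurePreserving_add_left (volume : Measure ℂ) u).quasiMeasurePreserving.ae_eq (hax l')
    have h2 : (fun u' : ℂ => W l' l (((2:ℝ)^(-α)) • rot (-θ) u')) =ᵐ[(volume : Measure ℂ)]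
        (fun u' : ℂ => Wm l' l (((2:ℝ)^(-α)) • rot (-θ) u')) := hTq.ae_eq (hWae l' l)
    filter_upwards [h1, h2] with u' e1 e2
    show x (u + u') l' * ((2:ℝ)^(-(2*α)) * W l' l (((2:ℝ)^(-α)) • rot (-θ) u'))
        = X l' (u + u') * ((2:ℝ)^(-(2*α)) * Wm l' l (((2:ℝ)^(-α)) • rot (-θ) u'))
    rw [show x (u + u') l' = X l' (u + u') from e1,
      show W l' l (((2:ℝ)^(-α)) • rot (-θ) u') = Wm l' l (((2:ℝ)^(-α)) • rot (-θ) u') from e2]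
  -- main per (θ, α, l) estimate
  have main : ∀ (θ : Real.Angle) (α : ℝ) (l : Fin M₁),
      ∫ u : ℂ, (layer1 M₀ M₁ σ W b x₁ u θ α l - layer1 M₀ M₁ σ W b x₂ u θ α l)^2
        ≤ (∑ l' : Fin M₀, B l' l) * ∑ l' : Fin M₀, B l' l * Ed l' := by
    intro θ α l
    have hprodX : ∀ (X : Fin M₀ → ℂ → ℝ), (∀ l'', StronglyMeasurable (X l'')) → ∀ l' : Fin M₀,
        StronglyMeasurable (fun u : ℂ => ∫ u' : ℂ, X l' (u + u') * K l' l θ α u') := by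
      intro X hX l'
      have : StronglyMeasurable (fun p : ℂ × ℂ => X l' (p.1 + p.2) * K l' l θ α p.2) :=
        (((hX l').measurable.comp (measurable_fst.add measurable_snd)).mul
          ((hKm l' l θ α).comp measurable_snd)).stronglyMeasurable
      exact this.integral_prod_right'
    set D : ℂ → ℝ := fun u =>
      σ ((∑ l' : Fin M₀, ∫ u' : ℂ, X₁ l' (u + u') * K l' l θ α u') + b l)
      - σ ((∑ l' : Fin M₀, ∫ u' : ℂ, X₂ l' (u + u') * K l' l θ α u') + b l) with hDdef
    have hDeq : ∀ u, layer1 M₀ M₁ σ W b x₁ u θ α l - layer1 M₀ M₁ σ W b x₂ u θ α l = D u :=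
      fun u => by rw [hlayer x₁ X₁ hX₁ae u θ α l, hlayer x₂ X₂ hX₂ae u θ α l]
    have hDm : Measurable D := by
      have h1 : Measurable fun u : ℂ =>
          (∑ l' : Fin M₀, ∫ u' : ℂ, X₁ l' (u + u') * K l' l θ α u') + b l :=
        ((Finset.measurable_sum Finset.univ fun l' _ =>
          (hprodX X₁ hX₁sm l').measurable).add_const _)
      have h2 : Measurable fun u : ℂ =>
          (∑ l' : Fin M₀, ∫ u' : ℂ, X₂ l' (u + u') * K l' l θ α u') + b l :=
        ((Finset.measurable_sum Finset.univ fun l' _ =>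
          (hprodX X₂ hX₂sm l').measurable).add_const _)
      exact (hσc.measurable.comp h1).sub (hσc.measurable.comp h2)
    set h : Fin M₀ → ℂ → ℝ≥0∞ := fun l' u =>
      ∫⁻ u' : ℂ, (‖d l' (u + u')‖₊ : ℝ≥0∞) * (‖K l' l θ α u'‖₊ : ℝ≥0∞) with hhdef
    have hpt : ∀ u, (‖D u‖₊ : ℝ≥0∞) ≤ ∑ l' : Fin M₀, h l' u := by
      intro u
      have step1 : |D u| ≤ ∑ l' : Fin M₀,
          |(∫ u' : ℂ, X₁ l' (u + u') * K l' l θ α u')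
            - ∫ u' : ℂ, X₂ l' (u + u') * K l' l θ α u'| := by
        refine le_trans (hσ _ _) ?_
        rw [add_sub_add_right_eq_sub, ← Finset.sum_sub_distrib]
        exact Finset.abs_sum_le_sum_abs _ _
      have step2 : ∀ l' : Fin M₀, ENNReal.ofReal
          |(∫ u' : ℂ, X₁ l' (u + u') * K l' l θ α u')
            - ∫ u' : ℂ, X₂ l' (u + u') * K l' l θ α u'| ≤ h l' u := by
        intro l'
        set f₁ : ℂ → ℝ := fun u' => X₁ l' (u + u') * K l' l θ α u' with hf₁
        set f₂ : ℂ → ℝ := fun u' => X₂ l' (u + u') * K l' l θ α u' with hf₂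
        set fd : ℂ → ℝ := fun u' => d l' (u + u') * K l' l θ α u' with hfdd
        have hfdm : Measurable fd :=
          ((hdm l').comp (measurable_id.const_add u)).mul (hKm l' l θ α)
        have hfd12 : ∀ u', fd u' = f₁ u' - f₂ u' := fun u' => by
          show d l' (u + u') * _ = _
          rw [hddef]; ring
        have hnorm : h l' u = ∫⁻ u' : ℂ, (‖fd u'‖₊ : ℝ≥0∞) :=
          (lintegral_congr fun u' => by rw [nnnorm_mul, ENNReal.coe_mul]).symm
        rcases eq_or_ne (h l' u) ⊤ with htop | hfin
        · rw [htop]; exact le_top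
        · have hfdi : Integrable fd := by
            refine ⟨hfdm.aestronglyMeasurable, ?_⟩
            rw [hasFiniteIntegral_def, show ∫⁻ a, ‖fd a‖ₑ = h l' u from hnorm.symm]
            exact lt_top_iff_ne_top.2 hfin
          by_cases h₁ : Integrable f₁
          · by_cases h₂ : Integrable f₂
            · have heq : (∫ u', f₁ u') - ∫ u', f₂ u' = ∫ u', fd u' := by
                rw [← integral_sub h₁ h₂]
                exact integral_congr_ae (Filter.Eventually.of_forall fun u' => (hfd12 u').symm)
              rw [heq, ← Real.enorm_eq_ofReal_abs, hnorm]
              exact enorm_integral_le_lintegral_enorm _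
            · exact absurd ((h₁.sub hfdi).congr (Filter.Eventually.of_forall fun u' => by
                show f₁ u' - fd u' = f₂ u'
                rw [hfd12 u']; ring)) h₂
          · by_cases h₂ : Integrable f₂
            · exact absurd ((h₂.add hfdi).congr (Filter.Eventually.of_forall fun u' => by
                show f₂ u' + fd u' = f₁ u'
                rw [hfd12 u']; ring)) h₁
            · rw [integral_undef h₁, integral_undef h₂]
              simp
      calc (‖D u‖₊ : ℝ≥0∞) = ENNReal.ofReal |D u| := Real.enorm_eq_ofReal_abs _
        _ ≤ ENNReal.ofReal (∑ l' : Fin M₀,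
            |(∫ u' : ℂ, X₁ l' (u + u') * K l' l θ α u')
              - ∫ u' : ℂ, X₂ l' (u + u') * K l' l θ α u'|) := ENNReal.ofReal_le_ofReal step1
        _ = ∑ l' : Fin M₀, ENNReal.ofReal
            |(∫ u' : ℂ, X₁ l' (u + u') * K l' l θ α u')
              - ∫ u' : ℂ, X₂ l' (u + u') * K l' l θ α u'| :=
            ENNReal.ofReal_sum_of_nonneg (fun i _ => abs_nonneg _)
        _ ≤ ∑ l' : Fin M₀, h l' u := Finset.sum_le_sum fun l' _ => step2 l'
    set q : Fin M₀ → ℂ → ℝ≥0∞ := fun l' u =>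
      ∫⁻ u' : ℂ, ((‖d l' (u + u')‖₊ : ℝ≥0∞))^2 * (‖K l' l θ α u'‖₊ : ℝ≥0∞) with hqdef
    have hqm : ∀ l', Measurable (q l') := by
      intro l'
      have : Measurable (fun p : ℂ × ℂ =>
          ((‖d l' (p.1 + p.2)‖₊ : ℝ≥0∞))^2 * (‖K l' l θ α p.2‖₊ : ℝ≥0∞)) :=
        ((((hdm l').comp (measurable_fst.add measurable_snd)).enorm.pow_const 2).mul
          ((hKm l' l θ α).comp measurable_snd).enorm)
      exact this.lintegral_prod_right'
    have hcs : ∀ u, (∑ l' : Fin M₀, h l' u)^2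
        ≤ (∑ l' : Fin M₀, ENNReal.ofReal (B l' l)) * (∑ l' : Fin M₀, q l' u) := by
      intro u
      have hW2 : ∀ l' : Fin M₀,
          h l' u ≤ (q l' u)^(1/2:ℝ) * (ENNReal.ofReal (B l' l))^(1/2:ℝ) := by
        intro l'
        have hw := Layer1Aux.lintegral_weighted_cs volume
          (fun u' : ℂ => (‖d l' (u + u')‖₊ : ℝ≥0∞)) (fun u' : ℂ => (‖K l' l θ α u'‖₊ : ℝ≥0∞))
          (((hdm l').comp (measurable_id.const_add u)).enorm.aemeasurable)
          ((hKm l' l θ α).enorm.aemeasurable)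
        rw [hKlint l' l θ α] at hw
        have h12 := ENNReal.rpow_le_rpow (z := (1/2:ℝ)) hw (by norm_num)
        rw [Layer1Aux.sq_rpow_half] at h12
        refine h12.trans ?_
        rw [ENNReal.mul_rpow_of_nonneg _ _ (by norm_num : (0:ℝ) ≤ 1/2), mul_comm]
      calc (∑ l' : Fin M₀, h l' u)^2
          ≤ (∑ l' : Fin M₀, (q l' u)^(1/2:ℝ) * (ENNReal.ofReal (B l' l))^(1/2:ℝ))^2 := by
            exact pow_le_pow_left₀ zero_le (Finset.sum_le_sum fun l' _ => hW2 l') 2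
        _ ≤ (∑ l' : Fin M₀, ((q l' u)^(1/2:ℝ))^2)
            * (∑ l' : Fin M₀, ((ENNReal.ofReal (B l' l))^(1/2:ℝ))^2) := Layer1Aux.finset_cs _ _
        _ = (∑ l' : Fin M₀, q l' u) * (∑ l' : Fin M₀, ENNReal.ofReal (B l' l)) := by
            simp_rw [Layer1Aux.rpow_half_sq]
        _ = _ := mul_comm _ _
    have hqint : ∀ l' : Fin M₀, ∫⁻ u : ℂ, q l' u
        = ENNReal.ofReal (B l' l) * ENNReal.ofReal (Ed l') := by
      intro l'
      have hswap : ∫⁻ u : ℂ, q l' u = ∫⁻ u' : ℂ, ∫⁻ u : ℂ,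
          ((‖d l' (u + u')‖₊ : ℝ≥0∞))^2 * (‖K l' l θ α u'‖₊ : ℝ≥0∞) :=
        lintegral_lintegral_swap
          (((((hdm l').comp (measurable_fst.add measurable_snd)).enorm.pow_const 2).mul
            ((hKm l' l θ α).comp measurable_snd).enorm).aemeasurable)
      rw [hswap]
      have h2 : ∀ u' : ℂ, (∫⁻ u : ℂ,
          ((‖d l' (u + u')‖₊ : ℝ≥0∞))^2 * (‖K l' l θ α u'‖₊ : ℝ≥0∞))
          = ENNReal.ofReal (Ed l') * (‖K l' l θ α u'‖₊ : ℝ≥0∞) := by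
        intro u'
        rw [lintegral_mul_const' _ _ (ENNReal.coe_ne_top)]
        congr 1
        rw [← hdlint l']
        exact lintegral_add_right_eq_self (fun w => ((‖d l' w‖₊ : ℝ≥0∞))^2) u'
      simp_rw [h2]
      rw [lintegral_const_mul' _ _ ENNReal.ofReal_ne_top, hKlint l' l θ α, mul_comm]
    have hsum_ne : (∑ l' : Fin M₀, ENNReal.ofReal (B l' l)) ≠ ⊤ := by
      simp [ENNReal.ofReal_ne_top]
    have hbound : ∫⁻ u : ℂ, ((‖D u‖₊ : ℝ≥0∞))^2
        ≤ (∑ l' : Fin M₀, ENNReal.ofReal (B l' l))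
          * ∑ l' : Fin M₀, ENNReal.ofReal (B l' l) * ENNReal.ofReal (Ed l') := by
      calc ∫⁻ u : ℂ, ((‖D u‖₊ : ℝ≥0∞))^2 ≤ ∫⁻ u : ℂ, (∑ l' : Fin M₀, h l' u)^2 :=
            lintegral_mono fun u => pow_le_pow_left₀ zero_le (hpt u) 2
        _ ≤ ∫⁻ u : ℂ, (∑ l' : Fin M₀, ENNReal.ofReal (B l' l)) * (∑ l' : Fin M₀, q l' u) :=
            lintegral_mono hcs
        _ = (∑ l' : Fin M₀, ENNReal.ofReal (B l' l)) * ∫⁻ u : ℂ, (∑ l' : Fin M₀, q l' u) :=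
            lintegral_const_mul' _ _ hsum_ne
        _ = (∑ l' : Fin M₀, ENNReal.ofReal (B l' l)) * ∑ l' : Fin M₀, ∫⁻ u : ℂ, q l' u := by
            rw [lintegral_finset_sum _ fun l' _ => hqm l']
        _ = _ := by rw [Finset.sum_congr rfl fun l' _ => hqint l']
    have hIeq : ∫ u : ℂ, (D u)^2 = (∫⁻ u : ℂ, ((‖D u‖₊ : ℝ≥0∞))^2).toReal := by
      rw [MeasureTheory.integral_eq_lintegral_of_nonneg_ae
        (Filter.Eventually.of_forall fun u => sq_nonneg _)
        ((hDm.pow_const 2).aestronglyMeasurable)]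
      congr 1
      exact lintegral_congr fun u => by
        rw [← enorm_eq_nnnorm, Real.enorm_eq_ofReal_abs, ← ENNReal.ofReal_pow (abs_nonneg _), _root_.sq_abs]
    have hC : ((∑ l' : Fin M₀, ENNReal.ofReal (B l' l)) *
        ∑ l' : Fin M₀, ENNReal.ofReal (B l' l) * ENNReal.ofReal (Ed l'))
        = ENNReal.ofReal ((∑ l' : Fin M₀, B l' l) * ∑ l' : Fin M₀, B l' l * Ed l') := by
      rw [← ENNReal.ofReal_sum_of_nonneg (fun i _ => hBnn i l)]
      have hm : ∀ l' : Fin M₀, ENNReal.ofReal (B l' l) * ENNReal.ofReal (Ed l')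
          = ENNReal.ofReal (B l' l * Ed l') := fun l' => (ENNReal.ofReal_mul (hBnn l' l)).symm
      simp_rw [hm]
      rw [← ENNReal.ofReal_sum_of_nonneg (fun i _ => mul_nonneg (hBnn i l) (hEdnn i)),
        ← ENNReal.ofReal_mul (Finset.sum_nonneg fun i _ => hBnn i l)]
    have hfinal : ∫ u : ℂ, (D u)^2
        ≤ (∑ l' : Fin M₀, B l' l) * ∑ l' : Fin M₀, B l' l * Ed l' := by
      rw [hIeq]
      calc (∫⁻ u : ℂ, ((‖D u‖₊ : ℝ≥0∞))^2).toReal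
          ≤ (ENNReal.ofReal ((∑ l' : Fin M₀, B l' l) * ∑ l' : Fin M₀, B l' l * Ed l')).toReal :=
            ENNReal.toReal_mono ENNReal.ofReal_ne_top (hC ▸ hbound)
        _ = _ := ENNReal.toReal_ofReal (mul_nonneg (Finset.sum_nonneg fun i _ => hBnn i l)
            (Finset.sum_nonneg fun i _ => mul_nonneg (hBnn i l) (hEdnn i)))
    calc ∫ u : ℂ, (layer1 M₀ M₁ σ W b x₁ u θ α l - layer1 M₀ M₁ σ W b x₂ u θ α l)^2
        = ∫ u : ℂ, (D u)^2 := by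
          refine integral_congr_ae (Filter.Eventually.of_forall fun u => ?_)
          dsimp only
          rw [hDeq u]
      _ ≤ _ := hfinal
  -- integrate in θ
  have hθ : ∀ (α : ℝ) (l : Fin M₁),
      (2 * Real.pi)⁻¹ * ∫ θ : Real.Angle, ∫ u : ℂ,
        (layer1 M₀ M₁ σ W b x₁ u θ α l - layer1 M₀ M₁ σ W b x₂ u θ α l)^2
      ≤ (∑ l' : Fin M₀, B l' l) * ∑ l' : Fin M₀, B l' l * Ed l' := by
    intro α l
    set C : ℝ := (∑ l' : Fin M₀, B l' l) * ∑ l' : Fin M₀, B l' l * Ed l' with hCdef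
    have hCnn : 0 ≤ C := mul_nonneg (Finset.sum_nonneg fun i _ => hBnn i l)
      (Finset.sum_nonneg fun i _ => mul_nonneg (hBnn i l) (hEdnn i))
    by_cases hint : Integrable (fun θ : Real.Angle => ∫ u : ℂ,
        (layer1 M₀ M₁ σ W b x₁ u θ α l - layer1 M₀ M₁ σ W b x₂ u θ α l)^2) volume
    · have hle : (∫ θ : Real.Angle, ∫ u : ℂ,
          (layer1 M₀ M₁ σ W b x₁ u θ α l - layer1 M₀ M₁ σ W b x₂ u θ α l)^2)
          ≤ ∫ _θ : Real.Angle, C :=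
        integral_mono hint (integrable_const C) (fun θ => main θ α l)
      rw [integral_const, smul_eq_mul, measureReal_def] at hle
      have hu : ((volume : Measure Real.Angle) Set.univ).toReal = 2 * Real.pi := by
        have h0 : (volume : Measure Real.Angle) Set.univ = ENNReal.ofReal (2 * Real.pi) :=
          AddCircle.measure_univ (2 * Real.pi)
        rw [h0, ENNReal.toReal_ofReal (le_of_lt Real.two_pi_pos)]
      rw [hu] at hle
      calc (2 * Real.pi)⁻¹ * ∫ θ : Real.Angle, ∫ u : ℂ,
            (layer1 M₀ M₁ σ W b x₁ u θ α l - layer1 M₀ M₁ σ W b x₂ u θ α l)^2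
          ≤ (2 * Real.pi)⁻¹ * (2 * Real.pi * C) :=
            mul_le_mul_of_nonneg_left hle (inv_nonneg.2 (le_of_lt Real.two_pi_pos))
        _ = C := by
            rw [← mul_assoc, inv_mul_cancel₀ (ne_of_gt Real.two_pi_pos), one_mul]
    · rw [integral_undef hint, mul_zero]
      exact hCnn
  -- assemble
  set t : ℝ := (M₀:ℝ)⁻¹ * ∑ l' : Fin M₀, Ed l' with htdef
  have htnn : 0 ≤ t := mul_nonneg (inv_nonneg.2 (Nat.cast_nonneg _))
    (Finset.sum_nonneg fun i _ => hEdnn i)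
  have hS₁le : ∀ l : Fin M₁, ∑ l' : Fin M₀, B l' l ≤ ⨆ l : Fin M₁, ∑ l' : Fin M₀, B l' l :=
    fun l => le_ciSup (f := fun l : Fin M₁ => ∑ l' : Fin M₀, B l' l)
      (Set.Finite.bddAbove (Set.finite_range _)) l
  have hS₂le : ∀ l' : Fin M₀, ∑ l : Fin M₁, B l' l ≤ ⨆ l' : Fin M₀, ∑ l : Fin M₁, B l' l :=
    fun l' => le_ciSup (f := fun l' : Fin M₀ => ∑ l : Fin M₁, B l' l)
      (Set.Finite.bddAbove (Set.finite_range _)) l'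
  set S₁ : ℝ := ⨆ l : Fin M₁, ∑ l' : Fin M₀, B l' l with hS₁def
  set S₂ : ℝ := ⨆ l' : Fin M₀, ∑ l : Fin M₁, B l' l with hS₂def
  have hS₁nn : 0 ≤ S₁ :=
    le_trans (Finset.sum_nonneg fun i _ => hBnn i (Classical.arbitrary _)) (hS₁le _)
  have hS₂nn : 0 ≤ S₂ :=
    le_trans (Finset.sum_nonneg fun i _ => hBnn (Classical.arbitrary _) i) (hS₂le _)
  have hS₁B : S₁ ≤ B₁ := by rw [hB₁]; exact le_max_left _ _
  have hS₂B : (M₀:ℝ)/(M₁:ℝ) * S₂ ≤ B₁ := by rw [hB₁]; exact le_max_right _ _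
  have hB₁nn : 0 ≤ B₁ := le_trans hS₁nn hS₁B
  have hM₀' : (0:ℝ) < (M₀:ℝ) := Nat.cast_pos.2 hM₀
  have hM₁' : (0:ℝ) < (M₁:ℝ) := Nat.cast_pos.2 hM₁
  have hsup : ∀ α : ℝ, (M₁:ℝ)⁻¹ * ∑ l : Fin M₁, (2 * Real.pi)⁻¹ * ∫ θ : Real.Angle, ∫ u : ℂ,
      (layer1 M₀ M₁ σ W b x₁ u θ α l - layer1 M₀ M₁ σ W b x₂ u θ α l)^2
      ≤ B₁^2 * t := by
    intro α
    have h1 : ∑ l : Fin M₁, (2 * Real.pi)⁻¹ * ∫ θ : Real.Angle, ∫ u : ℂ,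
        (layer1 M₀ M₁ σ W b x₁ u θ α l - layer1 M₀ M₁ σ W b x₂ u θ α l)^2
        ≤ ∑ l : Fin M₁, (∑ l' : Fin M₀, B l' l) * ∑ l' : Fin M₀, B l' l * Ed l' :=
      Finset.sum_le_sum fun l _ => hθ α l
    have h2 : ∑ l : Fin M₁, (∑ l' : Fin M₀, B l' l) * (∑ l' : Fin M₀, B l' l * Ed l')
        ≤ S₁ * (S₂ * ∑ l' : Fin M₀, Ed l') := by
      calc ∑ l : Fin M₁, (∑ l' : Fin M₀, B l' l) * (∑ l' : Fin M₀, B l' l * Ed l')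
          ≤ ∑ l : Fin M₁, S₁ * (∑ l' : Fin M₀, B l' l * Ed l') :=
            Finset.sum_le_sum fun l _ => mul_le_mul_of_nonneg_right (hS₁le l)
              (Finset.sum_nonneg fun i _ => mul_nonneg (hBnn i l) (hEdnn i))
        _ = S₁ * ∑ l' : Fin M₀, (∑ l : Fin M₁, B l' l) * Ed l' := by
            rw [← Finset.mul_sum]
            congr 1
            rw [Finset.sum_comm]
            exact Finset.sum_congr rfl fun l' _ => by rw [Finset.sum_mul]
        _ ≤ S₁ * ∑ l' : Fin M₀, S₂ * Ed l' :=
            mul_le_mul_of_nonneg_left (Finset.sum_le_sum fun l' _ =>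
              mul_le_mul_of_nonneg_right (hS₂le l') (hEdnn l')) hS₁nn
        _ = S₁ * (S₂ * ∑ l' : Fin M₀, Ed l') := by rw [← Finset.mul_sum]
    have h3 : (M₁:ℝ)⁻¹ * ∑ l : Fin M₁, (2 * Real.pi)⁻¹ * ∫ θ : Real.Angle, ∫ u : ℂ,
        (layer1 M₀ M₁ σ W b x₁ u θ α l - layer1 M₀ M₁ σ W b x₂ u θ α l)^2
        ≤ (M₁:ℝ)⁻¹ * (S₁ * (S₂ * ∑ l' : Fin M₀, Ed l')) :=
      mul_le_mul_of_nonneg_left (h1.trans h2) (inv_nonneg.2 hM₁'.le)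
    refine h3.trans ?_
    have hE : ∑ l' : Fin M₀, Ed l' = (M₀:ℝ) * t := by
      rw [htdef, ← mul_assoc, mul_inv_cancel₀ (ne_of_gt hM₀'), one_mul]
    rw [hE]
    have harith : (M₁:ℝ)⁻¹ * (S₁ * (S₂ * ((M₀:ℝ) * t))) = S₁ * (((M₀:ℝ)/(M₁:ℝ)) * S₂) * t := by
      field_simp
    rw [harith]
    have hfac : S₁ * (((M₀:ℝ)/(M₁:ℝ)) * S₂) ≤ B₁ * B₁ :=
      mul_le_mul hS₁B hS₂B (mul_nonneg (div_nonneg hM₀'.le hM₁'.le) hS₂nn) hB₁nn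
    calc S₁ * (((M₀:ℝ)/(M₁:ℝ)) * S₂) * t ≤ B₁ * B₁ * t :=
          mul_le_mul_of_nonneg_right hfac htnn
      _ = B₁^2 * t := by ring
  have hout : outNorm M₁ (fun u θ α lam =>
      layer1 M₀ M₁ σ W b x₁ u θ α lam - layer1 M₀ M₁ σ W b x₂ u θ α lam)
      ≤ Real.sqrt (B₁^2 * t) := by
    unfold outNorm
    refine Real.sqrt_le_sqrt ?_
    refine Real.iSup_le (fun α => ?_) (mul_nonneg (sq_nonneg _) htnn)
    exact hsup α
  refine hout.trans ?_
  rw [Real.sqrt_mul (sq_nonneg B₁), Real.sqrt_sq hB₁nn]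
  exact le_of_eq (by rw [htdef]; rfl)
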